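/- arXiv:1105.5740 — 2 statements merged into one kernel-verified Lean document; each statement's English description precedes it below -/
import Mathlib

section
/- Almost-sure comparability of graph and Euclidean distances at logarithmic scales: with ρ, c₆ as in the exponential chemical-distance bound and c₇ := 2(d+2)/c₆, there is a set Ω̂₂ ⊂ Ω of full Q-measure such that for every ω ∈ Ω̂₂ there exists a positive integer N(ω) with: for all n ≥ N(ω) and all z, y ∈ P(ω) with |z| ≤ n and |z − y| ≥ c₇ log n, one has d_ω(z, y) ≥ ρ |z − y|. -/
open MeasureTheory ProbabilityTheory Filter
open scoped ENNReal Topology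

namespace RWDPP

attribute [local instance] Classical.propDecidable


/-- Configuration space `Ω = {0,1}^{ℤ^d}`. -/
abbrev Cfg (d : ℕ) := (Fin d → ℤ) → Bool

/-- Canonical shift `T_y ω (x) = ω (x + y)`. -/
def shift (d : ℕ) (y : Fin d → ℤ) (ω : Cfg d) : Cfg d := fun x => ω (x + y)

/-- Embedding of `ℤ^d` into `ℝ^d` (with the Euclidean norm). -/
def toE (d : ℕ) (x : Fin d → ℤ) : EuclideanSpace ℝ (Fin d) := WithLp.toLp 2 (fun i => (x i : ℝ))

/-- Euclidean norm `|x|` of a lattice point. -/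
noncomputable def nrm (d : ℕ) (x : Fin d → ℤ) : ℝ := ‖toE d x‖

/-- Sup norm `|x|_∞` of a lattice point. -/
def nrmInf (d : ℕ) (x : Fin d → ℤ) : ℕ := Finset.univ.sup fun i => (x i).natAbs

/-- The `2d` unit vectors of `ℤ^d`. -/
def unitVecs (d : ℕ) : Set (Fin d → ℤ) :=
  {e | ∃ i : Fin d, e = Pi.single i 1 ∨ e = Pi.single i (-1)}

/-- `γ_e(ω) = inf {k ≥ 1 : ω(k e) = 1}`. -/
noncomputable def gamma (d : ℕ) (e : Fin d → ℤ) (ω : Cfg d) : ℕ :=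
  sInf {k : ℕ | 1 ≤ k ∧ ω ((k : ℤ) • e) = true}

/-- The nearest neighbor of `x` in direction `e`: `x + γ_e(T_x ω) e`. -/
noncomputable def nbr (d : ℕ) (ω : Cfg d) (x e : Fin d → ℤ) : Fin d → ℤ :=
  x + (gamma d e (shift d x ω) : ℤ) • e

/-- The set `N_x(ω)` of the `2d` nearest neighbors of `x`. -/
noncomputable def nbrs (d : ℕ) (ω : Cfg d) (x : Fin d → ℤ) : Set (Fin d → ℤ) :=
  {y | ∃ e ∈ unitVecs d, y = nbr d ω x e}

/-- `(p 0, …, p m)` is a `𝒫(ω)`-nearest neighbor path. -/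
def IsPath (d : ℕ) (ω : Cfg d) (p : ℕ → Fin d → ℤ) (m : ℕ) : Prop :=
  ω (p 0) = true ∧ ∀ k, 1 ≤ k → k ≤ m → p k ∈ nbrs d ω (p (k - 1))

/-- The event `Ω₀ = {ω : ω(0) = 1}`. -/
def Omega0 (d : ℕ) : Set (Cfg d) := {ω | ω 0 = true}

/-- The σ-field generated by the coordinates in `A`. -/
def coordSigma (d : ℕ) (A : Set (Fin d → ℤ)) : MeasurableSpace (Cfg d) :=
  MeasurableSpace.comap (fun ω (x : A) => ω x) inferInstance

/-- Assumptions (A1)–(A3) on the law `Q` of the discrete point process. -/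
structure Assumptions (d : ℕ) (Q : Measure (Cfg d)) : Prop where
  prob : IsProbabilityMeasure Q
  a1_pos : 0 < Q (Omega0 d)
  a1_lt : Q (Omega0 d) < 1
  a2 : ∃ ℓ : ℝ, 0 < ℓ ∧ ∀ A B : Set (Fin d → ℤ),
    (∀ x ∈ A, ∀ y ∈ B, ℓ ≤ nrm d (x - y)) →
      Indep (coordSigma d A) (coordSigma d B) Q
  a3 : ∀ y : Fin d → ℤ, MeasurePreserving (shift d y) Q Q

/-- The conditioned measure `P = Q(·|Ω₀)`. -/
noncomputable def condP (d : ℕ) (Q : Measure (Cfg d)) : Measure (Cfg d) := Q[|Omega0 d]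

/-- One-step transition probability of the RWDPP. -/
noncomputable def stepP (d : ℕ) (ω : Cfg d) (x y : Fin d → ℤ) : ℝ :=
  if y ∈ nbrs d ω x then 1 / (2 * d) else 0

/-- Discrete trajectory space. -/
abbrev Traj (d : ℕ) := ℕ → Fin d → ℤ

/-- `μ` is the family of quenched laws `P_ω^z` of the RWDPP in the environment `ω`:
`μ z` is a probability measure with `μ z (X₀ = z) = 1` under which `(X_n)` is the Markov
chain with transition probability `1/(2d)` to each nearest neighbor. -/
def IsQuenchedLaw (d : ℕ) (ω : Cfg d) (μ : (Fin d → ℤ) → Measure (Traj d)) : Prop :=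
  (∀ z, IsProbabilityMeasure (μ z)) ∧
  ∀ z, ω z = true → ∀ n : ℕ, ∀ x : Traj d,
    μ z {p | ∀ k ≤ n, p k = x k} =
      (if x 0 = z then 1 else 0) *
        ∏ k ∈ Finset.range n, ENNReal.ofReal (stepP d ω (x k) (x (k + 1)))

/-- `P(N_{t} - N_{s} = k)` for a rate-one Poisson process, `r = t - s`. -/
noncomputable def poissonProb (r : ℝ) (k : ℕ) : ℝ≥0∞ :=
  ENNReal.ofReal (Real.exp (-r) * r ^ k / (Nat.factorial k))

/-- `ν` is the law of (the path of) a rate-one Poisson process `(N_t)_{t ≥ 0}`. -/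
def IsPoissonPath (ν : Measure (ℝ → ℕ)) : Prop :=
  IsProbabilityMeasure ν ∧
  (∀ᵐ η ∂ν, Monotone η ∧ ∀ t : ℝ, t ≤ 0 → η t = 0) ∧
  ∀ m : ℕ, ∀ t : ℕ → ℝ, 0 ≤ t 0 → Monotone t → ∀ k : ℕ → ℕ,
    ν {η | ∀ i < m, η (t (i + 1)) - η (t i) = k i} =
      ∏ i ∈ Finset.range m, poissonProb (t (i + 1) - t i) (k i)

/-- The continuous-time walk `Y_t = X_{N_t}`, realized on the product of the trajectory
space of the discrete walk and the path space of the Poisson process. -/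
def Yt (d : ℕ) (q : Traj d × (ℝ → ℕ)) (t : ℝ) : Fin d → ℤ := q.1 (q.2 t)

/-- `τ_n = inf {t ≥ 0 : |Y_t - Y_0| ≥ n}`. -/
noncomputable def hitTime (d : ℕ) (n : ℕ) (q : Traj d × (ℝ → ℕ)) : ℝ :=
  sInf {t : ℝ | 0 ≤ t ∧ (n : ℝ) ≤ nrm d (Yt d q t - Yt d q 0)}

/-- `max_{x ∈ 𝒫(ω), |x| ≤ n} g x` (Euclidean balls). -/
noncomputable def maxOn (d : ℕ) (ω : Cfg d) (g : (Fin d → ℤ) → ℝ) (n : ℕ) : ℝ :=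
  sSup {r : ℝ | ∃ x, ω x = true ∧ nrm d x ≤ (n : ℝ) ∧ r = g x}

/-- `max_{x ∈ 𝒫(ω), |x|_∞ ≤ n} g x` (sup-norm boxes). -/
noncomputable def maxOnInf (d : ℕ) (ω : Cfg d) (g : (Fin d → ℤ) → ℝ) (n : ℕ) : ℝ :=
  sSup {r : ℝ | ∃ x, ω x = true ∧ nrmInf d x ≤ n ∧ r = g x}

/-- The `2d` unit vectors, as a finite set. -/
noncomputable def unitFinset (d : ℕ) : Finset (Fin d → ℤ) :=
  (Finset.univ.image fun i : Fin d => (Pi.single i 1 : Fin d → ℤ)) ∪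
    (Finset.univ.image fun i : Fin d => (Pi.single i (-1) : Fin d → ℤ))

/-- `x ↦ x + ψ x` is harmonic on `𝒫(ω)` for the RWDPP transition probability. -/
def IsHarmonicDeform (d : ℕ) (ω : Cfg d) (ψ : (Fin d → ℤ) → EuclideanSpace ℝ (Fin d)) : Prop :=
  ∀ x, ω x = true →
    (1 / (2 * (d : ℝ))) • ∑ e ∈ unitFinset d, (toE d (nbr d ω x e) + ψ (nbr d ω x e))
      = toE d x + ψ x

/-- `‖(χ(x,·) - χ(y,·)) 1{x ∈ 𝒫} 1{y ∈ N_x}‖_{L²(P)}²`. -/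
noncomputable def corrL2sq (d : ℕ) (P : Measure (Cfg d))
    (χ : (Fin d → ℤ) → Cfg d → EuclideanSpace ℝ (Fin d)) (x y : Fin d → ℤ) : ℝ≥0∞ :=
  ∫⁻ ω, ENNReal.ofReal
    (if ω x = true ∧ y ∈ nbrs d ω x then ‖χ x ω - χ y ω‖ ^ 2 else 0) ∂P

/-- Graph distance on `𝒫(ω)` (`⊤` if not connected). -/
noncomputable def graphDist (d : ℕ) (ω : Cfg d) (x y : Fin d → ℤ) : ℕ∞ :=
  sInf {m : ℕ∞ | ∃ k : ℕ, m = (k : ℕ∞) ∧ ∃ p : Traj d, p 0 = x ∧ p k = y ∧ IsPath d ω p k}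

-- auxiliary lemmas

variable {d : ℕ}

lemma shift_shift (a b : Fin d → ℤ) (ω : Cfg d) :
    shift d a (shift d b ω) = shift d (a + b) ω := by
  funext u; simp [shift, add_assoc]

lemma nbr_shift (z x e : Fin d → ℤ) (ω : Cfg d) :
    nbr d (shift d z ω) (x - z) e = nbr d ω x e - z := by
  rw [nbr, nbr, shift_shift, sub_add_cancel]; abel

lemma isPath_shift {ω : Cfg d} {p : ℕ → Fin d → ℤ} {m : ℕ} (z : Fin d → ℤ)
    (h : IsPath d ω p m) : IsPath d (shift d z ω) (fun j => p j - z) m := by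
  refine ⟨?_, ?_⟩
  · show shift d z ω (p 0 - z) = true
    show ω (p 0 - z + z) = true
    rw [sub_add_cancel]; exact h.1
  · intro k hk1 hkm
    obtain ⟨e, he, hpe⟩ := h.2 k hk1 hkm
    exact ⟨e, he, by rw [nbr_shift]; simp [← hpe]⟩

lemma graphDist_shift_le (z x y : Fin d → ℤ) (ω : Cfg d) :
    graphDist d (shift d z ω) (x - z) (y - z) ≤ graphDist d ω x y := by
  apply sInf_le_sInf
  rintro m ⟨k, rfl, p, hp0, hpk, hp⟩
  exact ⟨k, rfl, fun j => p j - z, by simp only [hp0], by simp only [hpk], isPath_shift z hp⟩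

lemma measure_preimage_shift_le (Q : Measure (Cfg d))
    (ha3 : ∀ y : Fin d → ℤ, MeasurePreserving (shift d y) Q Q)
    (z : Fin d → ℤ) (s : Set (Cfg d)) : Q (shift d z ⁻¹' s) ≤ Q s := by
  rw [measure_eq_iInf s]
  refine le_iInf fun t => le_iInf fun hst => le_iInf fun ht => ?_
  calc Q (shift d z ⁻¹' s) ≤ Q (shift d z ⁻¹' t) := measure_mono (Set.preimage_mono hst)
    _ = Q t := (ha3 z).measure_preimage ht.nullMeasurableSet

lemma abs_coord_le_nrm (x : Fin d → ℤ) (i : Fin d) : |((x i : ℝ))| ≤ nrm d x := by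
  have h1 : |(x i : ℝ)| = Real.sqrt (((x i : ℝ)) ^ 2) := (Real.sqrt_sq_eq_abs _).symm
  rw [nrm, EuclideanSpace.norm_eq, h1]
  apply Real.sqrt_le_sqrt
  have h2 : ((x i : ℝ)) ^ 2 = ‖toE d x i‖ ^ 2 := by
    rw [Real.norm_eq_abs, sq_abs]; rfl
  rw [h2]
  exact Finset.single_le_sum (f := fun j => ‖toE d x j‖ ^ 2)
    (fun j _ => sq_nonneg _) (Finset.mem_univ i)

lemma nrm_nonneg (x : Fin d → ℤ) : 0 ≤ nrm d x := norm_nonneg _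

lemma nrm_sub_symm (x y : Fin d → ℤ) : nrm d (x - y) = nrm d (y - x) := by
  have h : toE d (x - y) = -toE d (y - x) := by
    ext i
    show ((x i - y i : ℤ) : ℝ) = -((y i - x i : ℤ) : ℝ)
    push_cast; ring
  rw [nrm, nrm, h, norm_neg]

lemma sum_abs_le (x : Fin d → ℤ) : ∑ i, |(x i : ℝ)| ≤ d * nrm d x := by
  calc ∑ i, |(x i : ℝ)| ≤ ∑ _i : Fin d, nrm d x :=
        Finset.sum_le_sum fun i _ => abs_coord_le_nrm x i
    _ = d * nrm d x := by simp [Finset.sum_const, mul_comm]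

lemma tsum_translate {α : Type*} [AddCommGroup α] (g : α → ℝ≥0∞) (z : α) :
    (∑' y : α, g (y - z)) = ∑' w : α, g w := by
  have h := (Equiv.subRight z).tsum_eq g
  simpa [Equiv.subRight] using h

lemma tsum_pi_prod (h : ℤ → ℝ≥0∞) :
    ∀ m : ℕ, ∑' w : Fin m → ℤ, ∏ i, h (w i) = (∑' k : ℤ, h k) ^ m
  | 0 => by
    rw [pow_zero, tsum_eq_single (fun i => (0 : ℤ))]
    · simp
    · intro b hb; exact absurd (funext fun i => i.elim0) hb
  | (m + 1) => by
    rw [← (Fin.consEquiv fun _ : Fin (m + 1) => ℤ).tsum_eq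
      (fun w : Fin (m + 1) → ℤ => ∏ i, h (w i))]
    have : ∀ p : ℤ × (Fin m → ℤ),
        (∏ i, h (((Fin.consEquiv fun _ : Fin (m + 1) => ℤ) p) i))
          = h p.1 * ∏ i : Fin m, h (p.2 i) := by
      rintro ⟨k, v⟩
      rw [Fin.prod_univ_succ]
      simp [Fin.consEquiv_apply, Fin.cons_zero, Fin.cons_succ]
    calc ∑' p : ℤ × (Fin m → ℤ), ∏ i, h (((Fin.consEquiv fun _ : Fin (m + 1) => ℤ) p) i)
        = ∑' (k : ℤ) (v : Fin m → ℤ), h k * ∏ i, h (v i) := by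
          rw [ENNReal.tsum_prod']; simp only [this]
      _ = ∑' k : ℤ, h k * ∑' v : Fin m → ℤ, ∏ i, h (v i) := by
          congr 1; funext k; rw [ENNReal.tsum_mul_left]
      _ = (∑' k : ℤ, h k) ^ (m + 1) := by
          rw [ENNReal.tsum_mul_right, tsum_pi_prod h m, pow_succ, mul_comm]

lemma summable_exp_int {a : ℝ} (ha : 0 < a) :
    Summable fun k : ℤ => Real.exp (-(a * |(k : ℝ)|)) := by
  have hlt : Real.exp (-a) < 1 := Real.exp_lt_one_iff.mpr (by linarith)
  have hge : (0:ℝ) ≤ Real.exp (-a) := (Real.exp_pos _).le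
  have hgeo := summable_geometric_of_lt_one hge hlt
  apply Summable.of_nat_of_neg
  · refine hgeo.congr fun n => ?_
    rw [← Real.exp_nat_mul]
    congr 1
    rw [Int.cast_natCast, abs_of_nonneg (by positivity)]
    ring
  · refine hgeo.congr fun n => ?_
    rw [← Real.exp_nat_mul]
    congr 1
    rw [Int.cast_neg, Int.cast_natCast, abs_neg, abs_of_nonneg (by positivity)]
    ring

lemma tsum_ind_le (n : ℕ) :
    (∑' k : ℤ, (if |(k : ℝ)| ≤ (n : ℝ) then (1 : ℝ≥0∞) else 0))
      ≤ ((2 * n + 1 : ℕ) : ℝ≥0∞) := by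
  have hsupp : ∀ k : ℤ, k ∉ Finset.Icc (-(n : ℤ)) n →
      (if |(k : ℝ)| ≤ (n : ℝ) then (1 : ℝ≥0∞) else 0) = 0 := by
    intro k hk
    rw [if_neg]
    intro habs
    apply hk
    rw [Finset.mem_Icc, ← abs_le]
    exact_mod_cast habs
  rw [tsum_eq_sum hsupp]
  calc ∑ k ∈ Finset.Icc (-(n:ℤ)) n, (if |(k : ℝ)| ≤ (n : ℝ) then (1 : ℝ≥0∞) else 0)
      ≤ ∑ _k ∈ Finset.Icc (-(n:ℤ)) n, (1 : ℝ≥0∞) :=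
        Finset.sum_le_sum fun k _ => by split <;> simp
    _ = ((Finset.Icc (-(n:ℤ)) n).card : ℝ≥0∞) := by simp
    _ = ((2 * n + 1 : ℕ) : ℝ≥0∞) := by
        rw [Int.card_Icc]
        congr 1
        omega


set_option maxHeartbeats 1000000 in
/-- With `ρ, c₅, c₆` as in the exponential chemical-distance bound and
`c₇ = 2(d+2)/c₆`, there is a set `Ω̂₂` of full `Q`-measure such that for every `ω ∈ Ω̂₂`
there is `N(ω) ≥ 1` with: for all `n ≥ N(ω)` and all `z, y ∈ 𝒫(ω)` with `|z| ≤ n` and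
`|z - y| ≥ c₇ log n`, one has `d_ω(z, y) ≥ ρ |z - y|`. -/
theorem graph_dist_euclidean_comparable (d : ℕ) (hd : 1 ≤ d)
    (Q : Measure (Cfg d)) (hQ : Assumptions d Q)
    (ρ c₅ c₆ : ℝ) (hρ : 0 < ρ) (hc₅ : 0 < c₅) (hc₆ : 0 < c₆)
    (hbound : ∀ x : Fin d → ℤ,
      Q {ω | ω 0 = true ∧ ω x = true ∧
          (graphDist d ω 0 x : ℝ≥0∞) ≤ ENNReal.ofReal (ρ * nrm d x)}
        ≤ ENNReal.ofReal (c₅ * Real.exp (-(c₆ * nrm d x)))) :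
    ∃ Ωhat : Set (Cfg d), Q Ωhat = 1 ∧
      ∀ ω ∈ Ωhat, ∃ N : ℕ, 1 ≤ N ∧ ∀ n : ℕ, N ≤ n →
        ∀ z y : Fin d → ℤ, ω z = true → ω y = true → nrm d z ≤ n →
          2 * ((d : ℝ) + 2) / c₆ * Real.log n ≤ nrm d (z - y) →
            ENNReal.ofReal (ρ * nrm d (z - y)) ≤ (graphDist d ω z y : ℝ≥0∞) := by

  haveI := hQ.prob
  classical
  have hd0 : (0:ℝ) < d := by exact_mod_cast hd
  set c₇ : ℝ := 2 * ((d : ℝ) + 2) / c₆ with hc₇def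
  set a : ℝ := c₆ / 2 / d with hadef
  have ha : 0 < a := by positivity
  set S₀ : ℝ := ∑' k : ℤ, Real.exp (-(a * |(k : ℝ)|)) with hS₀def
  have hS₀sum : Summable fun k : ℤ => Real.exp (-(a * |(k : ℝ)|)) := summable_exp_int ha
  have hS₀nonneg : 0 ≤ S₀ := tsum_nonneg fun k => (Real.exp_pos _).le
  have hS1 : (∑' k : ℤ, ENNReal.ofReal (Real.exp (-(a * |(k : ℝ)|)))) = ENNReal.ofReal S₀ :=
    (ENNReal.ofReal_tsum_of_nonneg (fun k => (Real.exp_pos _).le) hS₀sum).symm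
  -- bad events
  set bad : ℕ → Set (Cfg d) := fun n =>
    {ω | ∃ z y : Fin d → ℤ, ω z = true ∧ ω y = true ∧ nrm d z ≤ (n:ℝ) ∧
      c₇ * Real.log n ≤ nrm d (z - y) ∧
      (graphDist d ω z y : ℝ≥0∞) < ENNReal.ofReal (ρ * nrm d (z - y))} with hbaddef
  set E : ℕ → (Fin d → ℤ) → (Fin d → ℤ) → Set (Cfg d) := fun n z y =>
    {ω | ω z = true ∧ ω y = true ∧ nrm d z ≤ (n:ℝ) ∧ c₇ * Real.log n ≤ nrm d (z - y) ∧
      (graphDist d ω z y : ℝ≥0∞) < ENNReal.ofReal (ρ * nrm d (z - y))} with hEdef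
  -- per-pair bound
  have hpair : ∀ n : ℕ, ∀ z y : Fin d → ℤ, Q (E n z y) ≤
      ENNReal.ofReal (c₅ * Real.exp (-(c₆/2 * (c₇ * Real.log n)))) *
        (∏ i, (if |(z i : ℝ)| ≤ (n:ℝ) then (1:ℝ≥0∞) else 0)) *
        (∏ i, ENNReal.ofReal (Real.exp (-(a * |((y - z) i : ℝ)|)))) := by
    intro n z y
    by_cases hcon : nrm d z ≤ (n:ℝ) ∧ c₇ * Real.log n ≤ nrm d (z - y)
    · obtain ⟨hzn, hlog⟩ := hcon
      have hsub : E n z y ⊆ shift d z ⁻¹' {ω | ω 0 = true ∧ ω (y - z) = true ∧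
          (graphDist d ω 0 (y - z) : ℝ≥0∞) ≤ ENNReal.ofReal (ρ * nrm d (y - z))} := by
        rintro ω ⟨hz, hy, -, -, hgd⟩
        refine ⟨?_, ?_, ?_⟩
        · show ω (0 + z) = true
          rwa [zero_add]
        · show ω (y - z + z) = true
          rwa [sub_add_cancel]
        · have h1 : graphDist d (shift d z ω) 0 (y - z) ≤ graphDist d ω z y := by
            have h := graphDist_shift_le z z y ω
            rwa [sub_self] at h
          have h2 : (graphDist d (shift d z ω) 0 (y - z) : ℝ≥0∞) ≤
              (graphDist d ω z y : ℝ≥0∞) := ENat.toENNReal_le.mpr h1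
          refine le_trans h2 (le_trans hgd.le (le_of_eq ?_))
          rw [nrm_sub_symm]
      have hw : c₇ * Real.log n ≤ nrm d (y - z) := by rwa [nrm_sub_symm] at hlog
      have e1 : Real.exp (-(c₆/2 * nrm d (y - z))) ≤
          Real.exp (-(c₆/2 * (c₇ * Real.log n))) := by
        apply Real.exp_le_exp.mpr
        nlinarith [hw, hc₆]
      have e2 : Real.exp (-(c₆/2 * nrm d (y - z))) ≤
          ∏ i, Real.exp (-(a * |((y - z) i : ℝ)|)) := by
        rw [← Real.exp_sum]
        apply Real.exp_le_exp.mpr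
        have hs1 : ∑ i, -(a * |((y - z) i : ℝ)|) = -(a * ∑ i, |((y - z) i : ℝ)|) := by
          rw [Finset.mul_sum, Finset.sum_neg_distrib]
        rw [hs1, neg_le_neg_iff]
        have hsum2 := sum_abs_le (d := d) (y - z)
        calc a * ∑ i, |((y - z) i : ℝ)| ≤ a * ((d : ℝ) * nrm d (y - z)) :=
              mul_le_mul_of_nonneg_left hsum2 ha.le
          _ = c₆/2 * nrm d (y - z) := by
              rw [hadef]; field_simp
      have hreal : c₅ * Real.exp (-(c₆ * nrm d (y - z))) ≤
          c₅ * Real.exp (-(c₆/2 * (c₇ * Real.log n))) *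
            ∏ i, Real.exp (-(a * |((y - z) i : ℝ)|)) := by
        have hdecomp : Real.exp (-(c₆ * nrm d (y - z))) =
            Real.exp (-(c₆/2 * nrm d (y - z))) * Real.exp (-(c₆/2 * nrm d (y - z))) := by
          rw [← Real.exp_add]; congr 1; ring
        rw [hdecomp, mul_assoc]
        apply mul_le_mul_of_nonneg_left _ hc₅.le
        exact mul_le_mul e1 e2 (Real.exp_pos _).le (Real.exp_pos _).le
      have hindone : (∏ i, (if |(z i : ℝ)| ≤ (n:ℝ) then (1:ℝ≥0∞) else 0)) = 1 :=
        Finset.prod_eq_one fun i _ => if_pos ((abs_coord_le_nrm z i).trans hzn)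
      calc Q (E n z y) ≤ Q {ω | ω 0 = true ∧ ω (y - z) = true ∧
            (graphDist d ω 0 (y - z) : ℝ≥0∞) ≤ ENNReal.ofReal (ρ * nrm d (y - z))} :=
            le_trans (measure_mono hsub) (measure_preimage_shift_le Q hQ.a3 z _)
        _ ≤ ENNReal.ofReal (c₅ * Real.exp (-(c₆ * nrm d (y - z)))) := hbound (y - z)
        _ ≤ ENNReal.ofReal (c₅ * Real.exp (-(c₆/2 * (c₇ * Real.log n))) *
              ∏ i, Real.exp (-(a * |((y - z) i : ℝ)|))) := ENNReal.ofReal_le_ofReal hreal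
        _ = ENNReal.ofReal (c₅ * Real.exp (-(c₆/2 * (c₇ * Real.log n)))) *
              (∏ i, (if |(z i : ℝ)| ≤ (n:ℝ) then (1:ℝ≥0∞) else 0)) *
              (∏ i, ENNReal.ofReal (Real.exp (-(a * |((y - z) i : ℝ)|)))) := by
            rw [hindone, mul_one,
              ENNReal.ofReal_mul (by positivity),
              ENNReal.ofReal_prod_of_nonneg (fun i _ => (Real.exp_pos _).le)]
    · have hempty : E n z y = (∅ : Set (Cfg d)) := by
        ext ω
        simp only [hEdef, Set.mem_setOf_eq, Set.mem_empty_iff_false, iff_false, not_and]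
        intro _ _ h3 h4
        exact absurd ⟨h3, h4⟩ hcon
      rw [hempty, measure_empty]
      exact zero_le
  -- covering and summing
  have hcover : ∀ n, bad n ⊆ ⋃ p : (Fin d → ℤ) × (Fin d → ℤ), E n p.1 p.2 := by
    rintro n ω ⟨z, y, h1, h2, h3, h4, h5⟩
    exact Set.mem_iUnion.mpr ⟨(z, y), h1, h2, h3, h4, h5⟩
  have hsum : ∀ n : ℕ, Q (bad n) ≤
      ENNReal.ofReal (c₅ * Real.exp (-(c₆/2 * (c₇ * Real.log n)))) *
        ((2 * n + 1 : ℕ) : ℝ≥0∞) ^ d * ENNReal.ofReal S₀ ^ d := by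
    intro n
    calc Q (bad n) ≤ Q (⋃ p : (Fin d → ℤ) × (Fin d → ℤ), E n p.1 p.2) :=
          measure_mono (hcover n)
      _ ≤ ∑' p : (Fin d → ℤ) × (Fin d → ℤ), Q (E n p.1 p.2) := measure_iUnion_le _
      _ ≤ ∑' p : (Fin d → ℤ) × (Fin d → ℤ),
            (ENNReal.ofReal (c₅ * Real.exp (-(c₆/2 * (c₇ * Real.log n)))) *
              (∏ i, (if |(p.1 i : ℝ)| ≤ (n:ℝ) then (1:ℝ≥0∞) else 0)) *
              (∏ i, ENNReal.ofReal (Real.exp (-(a * |((p.2 - p.1) i : ℝ)|))))) :=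
          ENNReal.tsum_le_tsum fun p => hpair n p.1 p.2
      _ = ∑' z : Fin d → ℤ, ∑' y : Fin d → ℤ,
            (ENNReal.ofReal (c₅ * Real.exp (-(c₆/2 * (c₇ * Real.log n)))) *
              (∏ i, (if |(z i : ℝ)| ≤ (n:ℝ) then (1:ℝ≥0∞) else 0)) *
              (∏ i, ENNReal.ofReal (Real.exp (-(a * |((y - z) i : ℝ)|))))) :=
          ENNReal.tsum_prod'
      _ = ∑' z : Fin d → ℤ,
            (ENNReal.ofReal (c₅ * Real.exp (-(c₆/2 * (c₇ * Real.log n)))) *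
              (∏ i, (if |(z i : ℝ)| ≤ (n:ℝ) then (1:ℝ≥0∞) else 0))) *
            ∑' y : Fin d → ℤ, ∏ i, ENNReal.ofReal (Real.exp (-(a * |((y - z) i : ℝ)|))) := by
          congr 1; funext z; rw [ENNReal.tsum_mul_left]
      _ = ∑' z : Fin d → ℤ,
            (ENNReal.ofReal (c₅ * Real.exp (-(c₆/2 * (c₇ * Real.log n)))) *
              (∏ i, (if |(z i : ℝ)| ≤ (n:ℝ) then (1:ℝ≥0∞) else 0))) *
            ∑' w : Fin d → ℤ, ∏ i, ENNReal.ofReal (Real.exp (-(a * |(w i : ℝ)|))) := by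
          congr 1; funext z; congr 1
          exact tsum_translate
            (fun w : Fin d → ℤ => ∏ i, ENNReal.ofReal (Real.exp (-(a * |(w i : ℝ)|)))) z
      _ = (∑' z : Fin d → ℤ,
            (ENNReal.ofReal (c₅ * Real.exp (-(c₆/2 * (c₇ * Real.log n)))) *
              (∏ i, (if |(z i : ℝ)| ≤ (n:ℝ) then (1:ℝ≥0∞) else 0)))) *
            ∑' w : Fin d → ℤ, ∏ i, ENNReal.ofReal (Real.exp (-(a * |(w i : ℝ)|))) :=
          ENNReal.tsum_mul_right
      _ = ENNReal.ofReal (c₅ * Real.exp (-(c₆/2 * (c₇ * Real.log n)))) *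
            (∑' z : Fin d → ℤ, ∏ i, (if |(z i : ℝ)| ≤ (n:ℝ) then (1:ℝ≥0∞) else 0)) *
            ∑' w : Fin d → ℤ, ∏ i, ENNReal.ofReal (Real.exp (-(a * |(w i : ℝ)|))) := by
          rw [ENNReal.tsum_mul_left]
      _ = ENNReal.ofReal (c₅ * Real.exp (-(c₆/2 * (c₇ * Real.log n)))) *
            (∑' k : ℤ, (if |(k : ℝ)| ≤ (n:ℝ) then (1:ℝ≥0∞) else 0)) ^ d *
            (∑' k : ℤ, ENNReal.ofReal (Real.exp (-(a * |(k : ℝ)|)))) ^ d := by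
          rw [tsum_pi_prod (fun k => (if |(k : ℝ)| ≤ (n:ℝ) then (1:ℝ≥0∞) else 0)) d,
            tsum_pi_prod (fun k => ENNReal.ofReal (Real.exp (-(a * |(k : ℝ)|)))) d]
      _ ≤ ENNReal.ofReal (c₅ * Real.exp (-(c₆/2 * (c₇ * Real.log n)))) *
            ((2 * n + 1 : ℕ) : ℝ≥0∞) ^ d * ENNReal.ofReal S₀ ^ d := by
          rw [hS1]
          gcongr
          exact tsum_ind_le n
  -- the final per-n bound
  set K : ℝ := 4 * c₅ * 3 ^ d * S₀ ^ d + 1 with hKdef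
  have hK1 : (1:ℝ) ≤ K := by
    have : (0:ℝ) ≤ 4 * c₅ * 3 ^ d * S₀ ^ d := by positivity
    linarith
  have hfin : ∀ n : ℕ, Q (bad n) ≤ ENNReal.ofReal (K / ((n:ℝ) + 1) ^ 2) := by
    intro n
    rcases Nat.eq_zero_or_pos n with rfl | hn
    · calc Q (bad 0) ≤ 1 := prob_le_one
        _ ≤ ENNReal.ofReal (K / (((0:ℕ):ℝ) + 1) ^ 2) := by
            rw [ENNReal.one_le_ofReal]
            norm_num
            linarith
    · have hn1 : (1:ℝ) ≤ (n:ℝ) := by exact_mod_cast hn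
      have hNpos : (0:ℝ) < (n:ℝ) := by linarith
      refine le_trans (hsum n) ?_
      have hC : Real.exp (-(c₆/2 * (c₇ * Real.log n))) = ((n:ℝ) ^ (d + 2))⁻¹ := by
        have hcc : c₆/2 * c₇ = (d:ℝ) + 2 := by
          rw [hc₇def]; field_simp
        have harg : -(c₆/2 * (c₇ * Real.log n)) = -(((d + 2 : ℕ):ℝ) * Real.log n) := by
          push_cast
          rw [← mul_assoc, hcc]
        rw [harg, Real.exp_neg, Real.exp_nat_mul, Real.exp_log hNpos]
      have hrw : ENNReal.ofReal (c₅ * Real.exp (-(c₆/2 * (c₇ * Real.log n)))) *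
            ((2 * n + 1 : ℕ) : ℝ≥0∞) ^ d * ENNReal.ofReal S₀ ^ d =
          ENNReal.ofReal (c₅ * ((n:ℝ) ^ (d + 2))⁻¹ * ((2 * n + 1 : ℕ):ℝ) ^ d * S₀ ^ d) := by
        rw [hC, ← ENNReal.ofReal_natCast (2 * n + 1),
          ← ENNReal.ofReal_pow (by positivity), ← ENNReal.ofReal_pow hS₀nonneg,
          ← ENNReal.ofReal_mul (by positivity), ← ENNReal.ofReal_mul (by positivity)]
      rw [hrw]
      apply ENNReal.ofReal_le_ofReal
      -- real estimate
      have h1 : ((2 * n + 1 : ℕ):ℝ) ^ d ≤ 3 ^ d * (n:ℝ) ^ d := by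
        rw [← mul_pow]
        apply pow_le_pow_left₀ (by positivity)
        push_cast
        linarith
      have hAd : (0:ℝ) < (n:ℝ) ^ d := by positivity
      calc c₅ * ((n:ℝ) ^ (d + 2))⁻¹ * ((2 * n + 1 : ℕ):ℝ) ^ d * S₀ ^ d
          ≤ c₅ * ((n:ℝ) ^ (d + 2))⁻¹ * (3 ^ d * (n:ℝ) ^ d) * S₀ ^ d := by
            apply mul_le_mul_of_nonneg_right _ (by positivity)
            exact mul_le_mul_of_nonneg_left h1 (by positivity)
        _ = (c₅ * 3 ^ d * S₀ ^ d) * ((n:ℝ) ^ 2)⁻¹ := by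
            rw [pow_add]
            field_simp
        _ ≤ (c₅ * 3 ^ d * S₀ ^ d) * (4 / ((n:ℝ) + 1) ^ 2) := by
            apply mul_le_mul_of_nonneg_left _ (by positivity)
            rw [inv_eq_one_div, div_le_div_iff₀ (by positivity) (by positivity)]
            nlinarith
        _ ≤ K / ((n:ℝ) + 1) ^ 2 := by
            have h5 : (c₅ * 3 ^ d * S₀ ^ d) * (4 / ((n:ℝ) + 1) ^ 2) =
                (4 * c₅ * 3 ^ d * S₀ ^ d) / ((n:ℝ) + 1) ^ 2 := by ring
            rw [h5, hKdef]
            gcongr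
            linarith
  -- Borel-Cantelli
  have hsummable : Summable (fun n : ℕ => K / ((n:ℝ) + 1) ^ 2) := by
    have h2 : Summable (fun n : ℕ => 1 / ((n:ℝ)) ^ 2) :=
      Real.summable_one_div_nat_pow.mpr one_lt_two
    have h3 : Summable (fun n : ℕ => 1 / (((n + 1 : ℕ)):ℝ) ^ 2) :=
      h2.comp_injective fun a b hab => by omega
    have h4 : Summable (fun n : ℕ => 1 / ((n:ℝ) + 1) ^ 2) := by
      refine h3.congr fun n => ?_
      push_cast
      ring
    refine (h4.mul_left K).congr fun n => ?_
    rw [mul_one_div]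
  have htsum : (∑' n, Q (bad n)) ≠ ⊤ := by
    refine ne_top_of_le_ne_top ?_ (ENNReal.tsum_le_tsum hfin)
    rw [← ENNReal.ofReal_tsum_of_nonneg (fun n => by positivity) hsummable]
    exact ENNReal.ofReal_ne_top
  have hlimsup : Q (limsup bad atTop) = 0 := measure_limsup_atTop_eq_zero htsum
  refine ⟨(limsup bad atTop)ᶜ, ?_, ?_⟩
  · refine le_antisymm prob_le_one ?_
    have hle : Q Set.univ ≤ Q (limsup bad atTop) + Q (limsup bad atTop)ᶜ := by
      rw [← Set.union_compl_self (limsup bad atTop)]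
      exact measure_union_le _ _
    rw [measure_univ, hlimsup, zero_add] at hle
    exact hle
  · intro ω hω
    rw [Set.mem_compl_iff, Filter.mem_limsup_iff_frequently_mem, Filter.not_frequently] at hω
    obtain ⟨N, hN⟩ := Filter.eventually_atTop.mp hω
    refine ⟨max N 1, le_max_right _ _, ?_⟩
    intro n hn z y hz hy hzn hlog
    by_contra hcontra
    exact hN n (le_trans (le_max_left _ _) hn)
      ⟨z, y, hz, hy, hzn, hlog, lt_of_not_ge hcontra⟩


end RWDPP
end

section
/- Condition (C) holds: let E_n be the event that for every y ∈ P(ω) ∩ [−n,n]^d there exists a P(ω)-nearest neighbor path from 0 to y all of whose points lie in [−n,n]^d. Then the sequence (P(E_n^c))_{n≥1} is summable; indeed there exist positive constants C₁, C₂ (depending on d and Q) such that P(E_n^c) ≤ C₁ ρ^{C₂ n} for all sufficiently large n, where ρ := 1 − Q(Ω₀). -/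
open MeasureTheory ProbabilityTheory Filter
open scoped ENNReal Topology

namespace RWDPP

attribute [local instance] Classical.propDecidable


/-- The event `E_n`: every `y ∈ 𝒫(ω) ∩ [-n,n]^d` is joined to `0` by a
`𝒫(ω)`-nearest neighbor path all of whose points lie in `[-n,n]^d`. -/
def En (d : ℕ) (n : ℕ) : Set (Cfg d) :=
  {ω | ∀ y : Fin d → ℤ, ω y = true → (∀ j : Fin d, (y j).natAbs ≤ n) →
    ∃ (m : ℕ) (z : Traj d), z 0 = 0 ∧ z m = y ∧ IsPath d ω z m ∧
      ∀ k ≤ m, ∀ j : Fin d, (z k j).natAbs ≤ n}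

section Comb
variable {d : ℕ}

/-- `x` lies in the box `[-n,n]^d`. -/
def InBox (n : ℕ) (x : Fin d → ℤ) : Prop := ∀ j, (x j).natAbs ≤ n

/-- There is a nearest-neighbor path from `x` to `y` staying in the box. -/
def Chain (ω : Cfg d) (n : ℕ) (x y : Fin d → ℤ) : Prop :=
  ∃ (m : ℕ) (z : Traj d), z 0 = x ∧ z m = y ∧ IsPath d ω z m ∧ ∀ k ≤ m, InBox n (z k)

lemma chain_refl {ω : Cfg d} {n : ℕ} {x : Fin d → ℤ} (hx : ω x = true) (hb : InBox n x) :
    Chain ω n x x :=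
  ⟨0, fun _ => x, rfl, rfl, ⟨hx, fun k hk hk' => absurd (le_trans hk hk') (by omega)⟩,
    fun _ _ => hb⟩

lemma chain_trans {ω : Cfg d} {n : ℕ} {x y z : Fin d → ℤ}
    (h1 : Chain ω n x y) (h2 : Chain ω n y z) : Chain ω n x z := by
  obtain ⟨m1, p, hp0, hpm, ⟨hpocc, hpstep⟩, hpbox⟩ := h1
  obtain ⟨m2, q, hq0, hqm, ⟨hqocc, hqstep⟩, hqbox⟩ := h2
  refine ⟨m1 + m2, fun k => if k ≤ m1 then p k else q (k - m1), ?_, ?_, ⟨?_, ?_⟩, ?_⟩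
  · simp [hp0]
  · by_cases h : m1 + m2 ≤ m1
    · have hm2 : m2 = 0 := by omega
      subst hm2
      simp only [Nat.add_zero, if_pos (le_refl m1), hpm, ← hq0, hqm]
    · simp only [if_neg h, Nat.add_sub_cancel_left, hqm]
  · simp only [if_pos (Nat.zero_le m1), hp0]
    rw [hp0] at hpocc; exact hpocc
  · intro k hk1 hkm
    simp only []
    by_cases h : k ≤ m1
    · have h' : k - 1 ≤ m1 := by omega
      rw [if_pos h, if_pos h']
      exact hpstep k hk1 h
    · have hq := hqstep (k - m1) (by omega) (by omega)
      rw [if_neg h]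
      have e2 : (if k - 1 ≤ m1 then p (k - 1) else q (k - 1 - m1)) = q (k - m1 - 1) := by
        by_cases h2 : k - 1 ≤ m1
        · rw [if_pos h2]
          have hk' : k - 1 = m1 := by omega
          have h3 : k - m1 - 1 = 0 := by omega
          rw [hk', hpm, ← hq0, h3]
        · rw [if_neg h2]
          have h3 : k - 1 - m1 = k - m1 - 1 := by omega
          rw [h3]
      rw [e2]
      exact hq
  · intro k hk
    by_cases h : k ≤ m1
    · simp only [if_pos h]; exact hpbox k h
    · simp only [if_neg h]; exact hqbox (k - m1) (by omega)

lemma chain_step {ω : Cfg d} {n : ℕ} {x w y : Fin d → ℤ}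
    (hx : ω x = true) (hbx : InBox n x) (hw : w ∈ nbrs d ω x) (h : Chain ω n w y) :
    Chain ω n x y := by
  obtain ⟨m, p, hp0, hpm, ⟨hpocc, hpstep⟩, hpbox⟩ := h
  refine ⟨m + 1, fun k => if k = 0 then x else p (k - 1), by simp, ?_, ⟨by simp [hx], ?_⟩, ?_⟩
  · simp only [if_neg (by omega : ¬ (m + 1 = 0))]
    simpa using hpm
  · intro k hk1 hkm
    by_cases h2 : k = 1
    · subst h2
      simp only [if_neg (by omega : ¬ (1 = 0)), if_pos rfl]
      rw [show (1:ℕ) - 1 = 0 from rfl, hp0]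
      exact hw
    · simp only [if_neg (by omega : ¬ (k = 0)), if_neg (by omega : ¬ (k - 1 = 0))]
      exact hpstep (k - 1) (by omega) (by omega)
  · intro k hk
    by_cases h2 : k = 0
    · simp only [if_pos h2]; exact hbx
    · simp only [if_neg h2]; exact hpbox (k - 1) (by omega)

lemma gamma_spec {ω : Cfg d} {e u : Fin d → ℤ} {c : ℕ} (hc : 1 ≤ c)
    (hocc : ω (u + (c : ℤ) • e) = true) :
    1 ≤ gamma d e (shift d u ω) ∧ gamma d e (shift d u ω) ≤ c ∧
      ω (u + (gamma d e (shift d u ω) : ℤ) • e) = true := by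
  have hmem : ∀ k : ℕ, (shift d u ω) ((k:ℤ) • e) = ω (u + (k:ℤ) • e) := by
    intro k; simp [shift, add_comm]
  have hcS : c ∈ {k : ℕ | 1 ≤ k ∧ (shift d u ω) ((k:ℤ) • e) = true} :=
    ⟨hc, by rw [hmem]; exact hocc⟩
  have hne : {k : ℕ | 1 ≤ k ∧ (shift d u ω) ((k:ℤ) • e) = true}.Nonempty := ⟨c, hcS⟩
  have hm := Nat.sInf_mem hne
  have hle : sInf {k : ℕ | 1 ≤ k ∧ (shift d u ω) ((k:ℤ) • e) = true} ≤ c := Nat.sInf_le hcS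
  refine ⟨hm.1, hle, ?_⟩
  rw [gamma, ← hmem]
  exact hm.2
end Comb

section Comb2
variable {d : ℕ}

lemma chain_line_dir {ω : Cfg d} {n : ℕ} (i : Fin d) (σ : ℤ) (hσ : σ = 1 ∨ σ = -1) :
    ∀ c : ℕ, ∀ u v : Fin d → ℤ, ω u = true → ω v = true → InBox n u → InBox n v →
      (∀ j, j ≠ i → u j = v j) → v i = u i + c * σ → Chain ω n u v := by
  intro c
  induction c using Nat.strong_induction_on with
  | _ c IH =>
    intro u v hu hv hbu hbv hagree hvi
    rcases Nat.eq_zero_or_pos c with hc0 | hc1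
    · have huv : u = v := by
        funext j
        by_cases hj : j = i
        · subst hj; rw [hvi, hc0]; ring
        · exact hagree j hj
      rw [← huv]
      exact chain_refl hu hbu
    · set e : Fin d → ℤ := Pi.single i σ with he_def
      have he : e ∈ unitVecs d := ⟨i, hσ.imp (fun h => by rw [he_def, h]) (fun h => by rw [he_def, h])⟩
      have hcoord : ∀ (k : ℤ) (j : Fin d), (u + k • e) j = if j = i then u i + k * σ else u j := by
        intro k j
        by_cases hj : j = i
        · subst hj; simp [he_def, Pi.single_apply, mul_comm]
        · simp [he_def, Pi.single_apply, hj]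
      have hvu : u + (c : ℤ) • e = v := by
        funext j
        rw [hcoord]
        by_cases hj : j = i
        · rw [if_pos hj, hj, hvi]
        · rw [if_neg hj]; exact hagree j hj
      obtain ⟨hg1, hgc, hgocc⟩ := gamma_spec (ω := ω) (e := e) (u := u) hc1 (show ω (u + (c:ℤ) • e) = true by rw [hvu]; exact hv)
      set γ := gamma d e (shift d u ω) with hγ
      set w : Fin d → ℤ := u + (γ : ℤ) • e with hw
      have hwnbr : w ∈ nbrs d ω u := ⟨e, he, rfl⟩
      have hwcoord : ∀ j, w j = if j = i then u i + (γ:ℤ) * σ else u j := fun j => hcoord _ j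
      have hbw : InBox n w := by
        intro j
        rw [hwcoord j]
        by_cases hj : j = i
        · rw [if_pos hj]
          have h1 := hbu i
          have h2 := hbv i
          have hγc : (γ : ℤ) ≤ (c : ℤ) := Int.ofNat_le.mpr hgc
          have hγ1 : (1 : ℤ) ≤ (γ : ℤ) := Int.ofNat_le.mpr hg1
          rcases hσ with h | h <;> subst h <;> omega
        · rw [if_neg hj]; exact hbu j
      have hwv : Chain ω n w v := by
        have hγc : γ ≤ c := hgc
        refine IH (c - γ) (by omega) w v hgocc hv hbw hbv ?_ ?_
        · intro j hj
          rw [hwcoord j, if_neg hj]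
          exact hagree j hj
        · rw [hwcoord i, if_pos rfl, hvi]
          have : ((c - γ : ℕ) : ℤ) = (c : ℤ) - (γ : ℤ) := by omega
          rw [this]; ring
      exact chain_step hu hbu hwnbr hwv

lemma chain_line {ω : Cfg d} {n : ℕ} {u v : Fin d → ℤ} (i : Fin d)
    (hu : ω u = true) (hv : ω v = true) (hbu : InBox n u) (hbv : InBox n v)
    (hagree : ∀ j, j ≠ i → u j = v j) : Chain ω n u v := by
  rcases le_total (u i) (v i) with h | h
  · exact chain_line_dir i 1 (Or.inl rfl) (v i - u i).toNat u v hu hv hbu hbv hagree (by omega)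
  · exact chain_line_dir i (-1) (Or.inr rfl) (u i - v i).toNat u v hu hv hbu hbv hagree (by omega)

end Comb2

section Nav
variable {d : ℕ}

lemma nav1 {D n : ℕ} (hD : 1 ≤ D) (hn : 2 * D + 2 ≤ n) :
    ∀ (N : ℕ) (c : ℤ), c.natAbs ≤ N → c.natAbs ≤ n → ∃ (K : ℕ) (a : ℕ → ℤ), a 0 = 0 ∧ a K = c ∧
      (∀ k ≤ K, (a k).natAbs ≤ n) ∧
      (∀ k < K, (a (k+1) - a k).natAbs = D ∨ (a (k+1) - a k).natAbs = D + 1) := by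
  intro N
  induction N using Nat.strong_induction_on with
  | _ N IH =>
    intro c hcN hcn
    rcases eq_or_ne c 0 with hc0 | hc0
    · exact ⟨0, fun _ => 0, rfl, by rw [hc0], fun k _ => by simp, fun k hk => absurd hk (by omega)⟩
    rcases le_or_gt c.natAbs D with hsmall | hbig
    · -- small case: 1 ≤ |c| ≤ D, go via c₁ = c ∓ 1 and w = c ± D
      obtain ⟨c₁, w, h1, h2, h3, h4⟩ :
          ∃ c₁ w : ℤ, c₁.natAbs + 1 = c.natAbs ∧ (w - c₁).natAbs = D + 1 ∧
            (c - w).natAbs = D ∧ w.natAbs ≤ 2 * D := by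
        rcases lt_or_gt_of_ne hc0 with h | h
        · exact ⟨c + 1, c - D, by omega, by omega, by omega, by omega⟩
        · exact ⟨c - 1, c + D, by omega, by omega, by omega, by omega⟩
      obtain ⟨K, a, ha0, haK, habox, hastep⟩ :=
        IH (N - 1) (by omega) c₁ (by omega) (by omega)
      refine ⟨K + 2, fun k => if k ≤ K then a k else if k = K + 1 then w else c,
        ?_, ?_, ?_, ?_⟩
      · simp [ha0]
      · simp only []
        rw [if_neg (show ¬ (K + 2 ≤ K) by omega), if_neg (show ¬ (K + 2 = K + 1) by omega)]
      · intro k hk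
        simp only []
        by_cases hk1 : k ≤ K
        · rw [if_pos hk1]; exact habox k hk1
        by_cases hk2 : k = K + 1
        · rw [if_neg hk1, if_pos hk2]; omega
        · rw [if_neg hk1, if_neg hk2]; omega
      · intro k hk
        simp only []
        by_cases hk1 : k < K
        · rw [if_pos (show k + 1 ≤ K by omega), if_pos (show k ≤ K by omega)]
          exact hastep k hk1
        by_cases hk2 : k = K
        · rw [hk2]
          rw [if_neg (show ¬ (K + 1 ≤ K) by omega), if_pos rfl, if_pos (le_refl K), haK]
          right; omega
        · have hk3 : k = K + 1 := by omega
          subst hk3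
          rw [if_neg (show ¬ (K + 1 + 1 ≤ K) by omega),
            if_neg (show ¬ (K + 1 + 1 = K + 1) by omega),
            if_neg (show ¬ (K + 1 ≤ K) by omega), if_pos rfl]
          left; omega
    · -- big case: |c| ≥ D + 1
      obtain ⟨c₁, h1, h2⟩ :
          ∃ c₁ : ℤ, c₁.natAbs + (D + 1) = c.natAbs ∧ (c - c₁).natAbs = D + 1 := by
        rcases lt_or_gt_of_ne hc0 with h | h
        · exact ⟨c + (D + 1), by omega, by omega⟩
        · exact ⟨c - (D + 1), by omega, by omega⟩
      obtain ⟨K, a, ha0, haK, habox, hastep⟩ :=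
        IH (N - 1) (by omega) c₁ (by omega) (by omega)
      refine ⟨K + 1, fun k => if k ≤ K then a k else c, ?_, ?_, ?_, ?_⟩
      · simp [ha0]
      · simp only []
        rw [if_neg (show ¬ (K + 1 ≤ K) by omega)]
      · intro k hk
        simp only []
        by_cases hk1 : k ≤ K
        · rw [if_pos hk1]; exact habox k hk1
        · rw [if_neg hk1]; exact hcn
      · intro k hk
        simp only []
        by_cases hk1 : k < K
        · rw [if_pos (show k + 1 ≤ K by omega), if_pos (show k ≤ K by omega)]
          exact hastep k hk1
        · have hk2 : k = K := by omega
          rw [hk2]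
          rw [if_neg (show ¬ (K + 1 ≤ K) by omega), if_pos (le_refl K), haK]
          right; omega

end Nav

section Navd
variable {d : ℕ}

/-- An admissible sequence of fiber indices. -/
def IdxSeq (D n : ℕ) (i0 : Fin d) (a : ℕ → Fin d → ℤ) (K : ℕ) : Prop :=
  (∀ k ≤ K, (a k) i0 = 0 ∧ InBox n (a k)) ∧
  ∀ k < K, ∃ i, i ≠ i0 ∧ (∀ j, j ≠ i → a (k+1) j = a k j) ∧
    ((a (k+1) i - a k i).natAbs = D ∨ (a (k+1) i - a k i).natAbs = D + 1)

lemma idxSeq_concat {D n : ℕ} {i0 : Fin d} {a b : ℕ → Fin d → ℤ} {K K' : ℕ}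
    (ha : IdxSeq D n i0 a K) (hb : IdxSeq D n i0 b K') (hab : a K = b 0) :
    ∃ c : ℕ → Fin d → ℤ, c 0 = a 0 ∧ c (K + K') = b K' ∧ IdxSeq D n i0 c (K + K') := by
  obtain ⟨hab1, hastep⟩ := ha
  obtain ⟨hbb1, hbstep⟩ := hb
  refine ⟨fun k => if k ≤ K then a k else b (k - K), by simp, ?_, ⟨?_, ?_⟩⟩
  · simp only []
    by_cases h : K + K' ≤ K
    · have h' : K' = 0 := by omega
      rw [if_pos h, h', Nat.add_zero, hab]
    · rw [if_neg h, Nat.add_sub_cancel_left]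
  · intro k hk
    simp only []
    by_cases h : k ≤ K
    · rw [if_pos h]; exact hab1 k h
    · rw [if_neg h]; exact hbb1 (k - K) (by omega)
  · intro k hk
    simp only []
    by_cases h : k < K
    · rw [if_pos (show k + 1 ≤ K by omega), if_pos (show k ≤ K by omega)]
      exact hastep k h
    · have e3 : k + 1 - K = k - K + 1 := by omega
      have e1 : (if k + 1 ≤ K then a (k+1) else b (k + 1 - K)) = b ((k - K) + 1) := by
        rw [if_neg (show ¬ (k + 1 ≤ K) by omega), e3]
      have e2 : (if k ≤ K then a k else b (k - K)) = b (k - K) := by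
        by_cases h2 : k ≤ K
        · have : k = K := by omega
          rw [if_pos h2, this, hab, Nat.sub_self]
        · rw [if_neg h2]
      rw [e1, e2]
      exact hbstep (k - K) (by omega)

lemma navd {D n : ℕ} (hD : 1 ≤ D) (hn : 2 * D + 2 ≤ n) (i0 : Fin d) (b : Fin d → ℤ)
    (hb0 : b i0 = 0) (hbox : InBox n b) :
    ∃ (K : ℕ) (a : ℕ → Fin d → ℤ), a 0 = 0 ∧ a K = b ∧ IdxSeq D n i0 a K := by
  have key : ∀ s : Finset (Fin d), ∃ (K : ℕ) (a : ℕ → Fin d → ℤ), a 0 = 0 ∧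
      (a K = fun j => if j ∈ s ∧ j ≠ i0 then b j else 0) ∧ IdxSeq D n i0 a K := by
    intro s
    induction s using Finset.induction_on with
    | empty =>
      refine ⟨0, fun _ _ => 0, rfl, by funext j; simp, ⟨fun k _ => ⟨rfl, fun j => by simp⟩,
        fun k hk => absurd hk (by omega)⟩⟩
    | @insert i s hi IH =>
      obtain ⟨K, a, h0, hK, hseq⟩ := IH
      by_cases hii : i = i0
      · refine ⟨K, a, h0, ?_, hseq⟩
        rw [hK]
        funext j
        by_cases hj : j = i0 <;> simp [Finset.mem_insert, hj, hii]
      · obtain ⟨K₁, a₁, g0, gK, gbox, gstep⟩ := nav1 hD hn (b i).natAbs (b i) le_rfl (hbox i)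
        set msk : Fin d → ℤ := fun j => if j ∈ s ∧ j ≠ i0 then b j else 0 with hmsk
        set B : ℕ → Fin d → ℤ := fun k => Function.update msk i (a₁ k) with hB
        have hmski : msk i = 0 := by simp [hmsk, hi]
        have hB0 : B 0 = msk := by
          funext j
          rw [hB]
          simp only []
          rw [Function.update_apply]
          by_cases hj : j = i
          · rw [if_pos hj, g0, hj, hmski]
          · rw [if_neg hj]
        have hBK : B K₁ = fun j => if j ∈ insert i s ∧ j ≠ i0 then b j else 0 := by
          funext j
          rw [hB]
          simp only []
          rw [Function.update_apply]
          by_cases hj : j = i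
          · rw [if_pos hj, gK, hj]
            simp [Finset.mem_insert, hii]
          · rw [if_neg hj]
            simp only [hmsk]
            simp [Finset.mem_insert, hj]
        have hBseq : IdxSeq D n i0 B K₁ := by
          constructor
          · intro k hk
            constructor
            · rw [hB]
              simp only []
              rw [Function.update_apply, if_neg (show i0 ≠ i from fun h => hii h.symm)]
              simp [hmsk]
            · intro j
              rw [hB]
              simp only []
              rw [Function.update_apply]
              by_cases hj : j = i
              · rw [if_pos hj]; exact gbox k hk
              · rw [if_neg hj]
                simp only [hmsk]
                split
                · exact hbox j
                · simp
          · intro k hk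
            refine ⟨i, hii, ?_, ?_⟩
            · intro j hj
              rw [hB]
              simp only []
              rw [Function.update_apply, Function.update_apply, if_neg hj, if_neg hj]
            · rw [hB]
              simp only []
              rw [Function.update_self, Function.update_self]
              exact gstep k hk
        obtain ⟨cc, hc0, hcK, hcseq⟩ := idxSeq_concat hseq hBseq (by rw [hK, hB0])
        exact ⟨K + K₁, cc, by rw [hc0, h0], by rw [hcK, hBK], hcseq⟩
  obtain ⟨K, a, h0, hK, hseq⟩ := key Finset.univ
  refine ⟨K, a, h0, ?_, hseq⟩
  rw [hK]
  funext j
  by_cases hj : j = i0 <;> simp [hj, hb0]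

end Navd

section MainComb
variable {d : ℕ}

lemma good_implies_En {D n : ℕ} (hD : 1 ≤ D) (hn : 2 * D + 2 ≤ n) (i0 : Fin d)
    (ω : Cfg d) (h0 : ω 0 = true)
    (hlink : ∀ b : Fin d → ℤ, b i0 = 0 → InBox n b → ∀ i : Fin d, i ≠ i0 → ∀ s : ℤ,
      (s = (D:ℤ) ∨ s = (D:ℤ) + 1) → (b i + s).natAbs ≤ n →
      ∃ t : ℤ, t.natAbs ≤ n ∧ ω (Function.update b i0 t) = true ∧
        ω (Function.update (Function.update b i (b i + s)) i0 t) = true) :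
    ω ∈ En d n := by
  intro y hy hybox
  set b : Fin d → ℤ := Function.update y i0 0 with hb
  have hb0 : b i0 = 0 := Function.update_self i0 0 y
  have hbbox : InBox n b := by
    intro j
    rw [hb]
    rw [Function.update_apply]
    split
    · simp
    · exact hybox j
  obtain ⟨K, a, ha0, haK, ⟨haIdx, haStep⟩⟩ := navd hD hn i0 b hb0 hbbox
  have main : ∀ k, k ≤ K → ∃ p : Fin d → ℤ, ω p = true ∧ InBox n p ∧
      (∀ j, j ≠ i0 → p j = a k j) ∧ Chain ω n 0 p := by
    intro k
    induction k with
    | zero =>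
      intro _
      exact ⟨0, h0, fun j => by simp, fun j _ => by rw [ha0], chain_refl h0 (fun j => by simp)⟩
    | succ k IH =>
      intro hk1
      obtain ⟨p, hpocc, hpbox, hpagree, hpchain⟩ := IH (by omega)
      obtain ⟨i, hii, hstepagree, hstepabs⟩ := haStep k (by omega)
      have hIk := haIdx k (by omega)
      have hIk1 := haIdx (k+1) (by omega)
      set δ : ℤ := a (k+1) i - a k i with hδ
      have hδne : δ ≠ 0 := by rcases hstepabs with h | h <;> omega
      have hstep' : ∀ j, j ≠ i → a (k+1) j = a k j := hstepagree
      rcases lt_or_gt_of_ne hδne with hneg | hpos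
      · -- δ < 0 : link from fiber a (k+1) with s = -δ
        obtain ⟨t, ht, hocc1, hocc2⟩ := hlink (a (k+1)) hIk1.1 hIk1.2 i hii (-δ)
          (by rcases hstepabs with h | h <;> [left; right] <;> omega)
          (by
            have e : a (k+1) i + (-δ) = a k i := by rw [hδ]; ring
            rw [e]; exact hIk.2 i)
        have hinner : Function.update (a (k+1)) i (a (k+1) i + (-δ)) = a k := by
          funext j
          rw [Function.update_apply]
          by_cases hj : j = i
          · rw [if_pos hj, hj]; rw [hδ]; ring
          · rw [if_neg hj]; exact hstep' j hj
        rw [hinner] at hocc2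
        set x₁ : Fin d → ℤ := Function.update (a k) i0 t with hx₁
        set x₂ : Fin d → ℤ := Function.update (a (k+1)) i0 t with hx₂
        have hbx₁ : InBox n x₁ := by
          intro j
          rw [hx₁, Function.update_apply]
          by_cases hj : j = i0
          · rw [if_pos hj]; exact ht
          · rw [if_neg hj]; exact hIk.2 j
        have hbx₂ : InBox n x₂ := by
          intro j
          rw [hx₂, Function.update_apply]
          by_cases hj : j = i0
          · rw [if_pos hj]; exact ht
          · rw [if_neg hj]; exact hIk1.2 j
        have ch1 : Chain ω n p x₁ := by
          refine chain_line i0 hpocc hocc2 hpbox hbx₁ ?_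
          intro j hj
          rw [hx₁, Function.update_apply, if_neg hj]
          exact hpagree j hj
        have ch2 : Chain ω n x₁ x₂ := by
          refine chain_line i hocc2 hocc1 hbx₁ hbx₂ ?_
          intro j hj
          rw [hx₁, hx₂, Function.update_apply, Function.update_apply]
          by_cases hj0 : j = i0
          · rw [if_pos hj0, if_pos hj0]
          · rw [if_neg hj0, if_neg hj0]
            exact (hstep' j hj).symm
        refine ⟨x₂, hocc1, hbx₂, ?_, chain_trans (chain_trans hpchain ch1) ch2⟩
        intro j hj
        rw [hx₂, Function.update_apply, if_neg hj]
      · -- δ > 0 : link from fiber a k with s = δ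
        obtain ⟨t, ht, hocc1, hocc2⟩ := hlink (a k) hIk.1 hIk.2 i hii δ
          (by rcases hstepabs with h | h <;> [left; right] <;> omega)
          (by
            have e : a k i + δ = a (k+1) i := by rw [hδ]; ring
            rw [e]; exact hIk1.2 i)
        have hinner : Function.update (a k) i (a k i + δ) = a (k+1) := by
          funext j
          rw [Function.update_apply]
          by_cases hj : j = i
          · rw [if_pos hj, hj]; rw [hδ]; ring
          · rw [if_neg hj]; exact (hstep' j hj).symm
        rw [hinner] at hocc2
        set x₁ : Fin d → ℤ := Function.update (a k) i0 t with hx₁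
        set x₂ : Fin d → ℤ := Function.update (a (k+1)) i0 t with hx₂
        have hbx₁ : InBox n x₁ := by
          intro j
          rw [hx₁, Function.update_apply]
          by_cases hj : j = i0
          · rw [if_pos hj]; exact ht
          · rw [if_neg hj]; exact hIk.2 j
        have hbx₂ : InBox n x₂ := by
          intro j
          rw [hx₂, Function.update_apply]
          by_cases hj : j = i0
          · rw [if_pos hj]; exact ht
          · rw [if_neg hj]; exact hIk1.2 j
        have ch1 : Chain ω n p x₁ := by
          refine chain_line i0 hpocc hocc1 hpbox hbx₁ ?_
          intro j hj
          rw [hx₁, Function.update_apply, if_neg hj]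
          exact hpagree j hj
        have ch2 : Chain ω n x₁ x₂ := by
          refine chain_line i hocc1 hocc2 hbx₁ hbx₂ ?_
          intro j hj
          rw [hx₁, hx₂, Function.update_apply, Function.update_apply]
          by_cases hj0 : j = i0
          · rw [if_pos hj0, if_pos hj0]
          · rw [if_neg hj0, if_neg hj0]
            exact (hstep' j hj).symm
        refine ⟨x₂, hocc2, hbx₂, ?_, chain_trans (chain_trans hpchain ch1) ch2⟩
        intro j hj
        rw [hx₂, Function.update_apply, if_neg hj]
  obtain ⟨p, hpocc, hpbox, hpagree, hpchain⟩ := main K (le_refl K)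
  have hfinal : Chain ω n p y := by
    refine chain_line i0 hpocc hy hpbox (fun j => hybox j) ?_
    intro j hj
    rw [hpagree j hj, haK, hb, Function.update_apply, if_neg hj]
  obtain ⟨m, z, hz0, hzm, hpath, hzbox⟩ := chain_trans hpchain hfinal
  exact ⟨m, z, hz0, hzm, hpath, fun k hk j => hzbox k hk j⟩

end MainComb

section Prob
variable {d : ℕ}

lemma measurable_coordEvent (x : Fin d → ℤ) : MeasurableSet {ω : Cfg d | ω x = true} := by
  have h : {ω : Cfg d | ω x = true} = (fun ω : Cfg d => ω x) ⁻¹' {true} := rfl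
  rw [h]
  exact measurable_pi_apply x (measurableSet_singleton true)

lemma measurable_Omega0 : MeasurableSet (Omega0 d) := measurable_coordEvent 0

lemma coordSigma_mono {A B : Set (Fin d → ℤ)} (h : A ⊆ B) : coordSigma d A ≤ coordSigma d B := by
  have heq : (fun ω (x : A) => ω x) =
      (fun (f : B → Bool) (x : A) => f ⟨x.1, h x.2⟩) ∘ (fun (ω : Cfg d) (x : B) => ω x) := rfl
  rw [coordSigma, heq, ← MeasurableSpace.comap_comp]
  refine MeasurableSpace.comap_mono ?_
  exact Measurable.comap_le (measurable_pi_lambda _ (fun x => measurable_pi_apply _))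

lemma coordEvent_mem {A : Set (Fin d → ℤ)} {x : Fin d → ℤ} (hx : x ∈ A) :
    MeasurableSet[coordSigma d A] {ω : Cfg d | ω x = true} :=
  ⟨(fun f : A → Bool => f ⟨x, hx⟩) ⁻¹' {true},
    measurable_pi_apply _ (measurableSet_singleton true), rfl⟩

lemma pairFail_mem {A : Set (Fin d → ℤ)} {x y : Fin d → ℤ} (hx : x ∈ A) (hy : y ∈ A) :
    MeasurableSet[coordSigma d A] {ω : Cfg d | ¬ (ω x = true ∧ ω y = true)} := by
  have h : {ω : Cfg d | ¬ (ω x = true ∧ ω y = true)} =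
      ({ω : Cfg d | ω x = true} ∩ {ω : Cfg d | ω y = true})ᶜ := by
    ext ω; simp [Set.mem_inter_iff]
  rw [h]
  exact ((coordEvent_mem hx).inter (coordEvent_mem hy)).compl

lemma single_prob (Q : Measure (Cfg d)) (hQ : Assumptions d Q) (x : Fin d → ℤ) :
    Q {ω : Cfg d | ω x = true} = Q (Omega0 d) := by
  have h : {ω : Cfg d | ω x = true} = shift d x ⁻¹' (Omega0 d) := by
    ext ω
    simp [shift, Omega0]
  rw [h]
  exact (hQ.a3 x).measure_preimage measurable_Omega0.nullMeasurableSet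

lemma coord_le_nrm (x : Fin d → ℤ) (i : Fin d) : |((x i : ℤ) : ℝ)| ≤ nrm d x := by
  rw [nrm, EuclideanSpace.norm_eq, ← Real.sqrt_sq_eq_abs]
  apply Real.sqrt_le_sqrt
  have h := Finset.single_le_sum (f := fun j => ‖toE d x j‖ ^ 2)
    (fun j _ => sq_nonneg _) (Finset.mem_univ i)
  have he : ‖toE d x i‖ ^ 2 = ((x i : ℤ) : ℝ) ^ 2 := by
    rw [toE, Real.norm_eq_abs, sq_abs]
  simpa only [he] using h

lemma nrm_ge {x y : Fin d → ℤ} {i : Fin d} {ℓ : ℝ} (h : ℓ ≤ ((x i - y i).natAbs : ℝ)) :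
    ℓ ≤ nrm d (x - y) := by
  refine h.trans ?_
  have h3 : ((x i - y i).natAbs : ℝ) = |(((x - y) i : ℤ) : ℝ)| := by
    rw [Nat.cast_natAbs, Pi.sub_apply, Int.cast_abs]
  rw [h3]
  exact coord_le_nrm _ i

lemma pair_prob (Q : Measure (Cfg d)) (hQ : Assumptions d Q) {ℓ : ℝ}
    (ha2 : ∀ A B : Set (Fin d → ℤ), (∀ x ∈ A, ∀ y ∈ B, ℓ ≤ nrm d (x - y)) →
      Indep (coordSigma d A) (coordSigma d B) Q)
    {u v : Fin d → ℤ} (huv : ℓ ≤ nrm d (u - v)) :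
    Q ({ω : Cfg d | ω u = true} ∩ {ω : Cfg d | ω v = true}) = Q (Omega0 d) * Q (Omega0 d) := by
  have hind := ha2 {u} {v} (by
    intro x hx y hy
    rw [Set.mem_singleton_iff] at hx hy
    rw [hx, hy]
    exact huv)
  have h := (Indep_iff _ _ _).1 hind _ _ (coordEvent_mem rfl) (coordEvent_mem rfl)
  rw [h, single_prob Q hQ u, single_prob Q hQ v]

lemma indep_prod (Q : Measure (Cfg d)) (hQ : Assumptions d Q) {ℓ : ℝ}
    (ha2 : ∀ A B : Set (Fin d → ℤ), (∀ x ∈ A, ∀ y ∈ B, ℓ ≤ nrm d (x - y)) →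
      Indep (coordSigma d A) (coordSigma d B) Q)
    (u v : ℕ → Fin d → ℤ) :
    ∀ T : Finset ℕ,
    (∀ j ∈ T, ∀ j' ∈ T, j ≠ j' → ∀ x ∈ ({u j, v j} : Set (Fin d → ℤ)),
      ∀ y ∈ ({u j', v j'} : Set (Fin d → ℤ)), ℓ ≤ nrm d (x - y)) →
    Q (⋂ j ∈ T, {ω : Cfg d | ¬ (ω (u j) = true ∧ ω (v j) = true)}) =
      ∏ j ∈ T, Q {ω : Cfg d | ¬ (ω (u j) = true ∧ ω (v j) = true)} := by
  haveI := hQ.prob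
  intro T
  induction T using Finset.induction_on with
  | empty => intro _; simp
  | @insert a T ha IH =>
    intro hsep
    have hsub : ∀ j ∈ T, ({u j, v j} : Set (Fin d → ℤ)) ⊆ ⋃ j' ∈ (T : Set ℕ), {u j', v j'} := by
      intro j hj
      exact Set.subset_biUnion_of_mem (u := fun j' => ({u j', v j'} : Set (Fin d → ℤ))) hj
    have hind := ha2 {u a, v a} (⋃ j ∈ (T : Set ℕ), {u j, v j}) (by
      intro x hx y hy
      rw [Set.mem_iUnion₂] at hy
      obtain ⟨j, hj, hyj⟩ := hy
      exact hsep a (Finset.mem_insert_self a T) j (Finset.mem_insert_of_mem hj)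
        (fun h => ha (h ▸ hj)) x hx y hyj)
    have hmem1 : MeasurableSet[coordSigma d {u a, v a}]
        {ω : Cfg d | ¬ (ω (u a) = true ∧ ω (v a) = true)} :=
      pairFail_mem (by simp) (by simp)
    have hmem2 : MeasurableSet[coordSigma d (⋃ j ∈ (T : Set ℕ), {u j, v j})]
        (⋂ j ∈ T, {ω : Cfg d | ¬ (ω (u j) = true ∧ ω (v j) = true)}) := by
      refine MeasurableSet.biInter T.countable_toSet (fun j hj => ?_)
      exact coordSigma_mono (hsub j hj) _ (pairFail_mem (by simp) (by simp))
    rw [Finset.set_biInter_insert, (Indep_iff _ _ _).1 hind _ _ hmem1 hmem2,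
      Finset.prod_insert ha, IH (fun j hj j' hj' hne => hsep j (Finset.mem_insert_of_mem hj)
        j' (Finset.mem_insert_of_mem hj') hne)]

end Prob

section BadBound
variable {d : ℕ}

lemma bad_bound (Q : Measure (Cfg d)) (hQ : Assumptions d Q) {ℓ : ℝ}
    (ha2 : ∀ A B : Set (Fin d → ℤ), (∀ x ∈ A, ∀ y ∈ B, ℓ ≤ nrm d (x - y)) →
      Indep (coordSigma d A) (coordSigma d B) Q)
    {D : ℕ} (hℓD : ℓ ≤ (D:ℝ)) (hD1 : 1 ≤ D)
    (i0 i : Fin d) (hii : i ≠ i0) (b : Fin d → ℤ) (s : ℤ) (hs : (D:ℤ) ≤ s) (m : ℕ) (n : ℕ) :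
    Q (⋂ j ∈ Finset.range m, {ω : Cfg d |
        ¬ (ω (Function.update b i0 (-(n:ℤ) + j * D)) = true ∧
           ω (Function.update (Function.update b i (b i + s)) i0 (-(n:ℤ) + j * D)) = true)})
      = (1 - Q (Omega0 d) * Q (Omega0 d)) ^ m := by
  haveI := hQ.prob
  set u : ℕ → Fin d → ℤ := fun j => Function.update b i0 (-(n:ℤ) + j * D) with hu
  set v : ℕ → Fin d → ℤ :=
    (fun j => Function.update (Function.update b i (b i + s)) i0 (-(n:ℤ) + j * D)) with hv
  have hui0 : ∀ j, u j i0 = -(n:ℤ) + j * D := fun j => Function.update_self _ _ _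
  have hvi0 : ∀ j, v j i0 = -(n:ℤ) + j * D := fun j => Function.update_self _ _ _
  have hsep : ∀ j ∈ Finset.range m, ∀ j' ∈ Finset.range m, j ≠ j' →
      ∀ x ∈ ({u j, v j} : Set (Fin d → ℤ)), ∀ y ∈ ({u j', v j'} : Set (Fin d → ℤ)),
        ℓ ≤ nrm d (x - y) := by
    intro j _ j' _ hne x hx y hy
    have hx0 : x i0 = -(n:ℤ) + j * D := by
      rcases hx with rfl | hx
      · exact hui0 j
      · rw [Set.mem_singleton_iff] at hx; rw [hx]; exact hvi0 j
    have hy0 : y i0 = -(n:ℤ) + j' * D := by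
      rcases hy with rfl | hy
      · exact hui0 j'
      · rw [Set.mem_singleton_iff] at hy; rw [hy]; exact hvi0 j'
    refine nrm_ge (i := i0) ?_
    have hdiff : x i0 - y i0 = ((j:ℤ) - j') * D := by rw [hx0, hy0]; ring
    have hA : 1 ≤ ((j:ℤ) - j').natAbs := by omega
    have hDle : D ≤ (x i0 - y i0).natAbs := by
      rw [hdiff, Int.natAbs_mul, Int.natAbs_natCast]
      exact le_mul_of_one_le_left (Nat.zero_le D) hA
    refine hℓD.trans ?_
    exact_mod_cast Nat.cast_le.2 hDle
  rw [indep_prod Q hQ ha2 u v (Finset.range m) hsep]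
  have hfac : ∀ j ∈ Finset.range m,
      Q {ω : Cfg d | ¬ (ω (u j) = true ∧ ω (v j) = true)}
        = 1 - Q (Omega0 d) * Q (Omega0 d) := by
    intro j _
    have hset : {ω : Cfg d | ¬ (ω (u j) = true ∧ ω (v j) = true)} =
        ({ω : Cfg d | ω (u j) = true} ∩ {ω : Cfg d | ω (v j) = true})ᶜ := by
      ext ω; simp [Set.mem_inter_iff]
    have hpair : Q ({ω : Cfg d | ω (u j) = true} ∩ {ω : Cfg d | ω (v j) = true})
        = Q (Omega0 d) * Q (Omega0 d) := by
      refine pair_prob Q hQ ha2 (nrm_ge (i := i) ?_)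
      have hu_i : u j i = b i := by
        rw [hu]
        simp only []
        rw [Function.update_apply, if_neg hii]
      have hv_i : v j i = b i + s := by
        rw [hv]
        simp only []
        rw [Function.update_apply, if_neg hii, Function.update_self]
      have hDle : D ≤ (u j i - v j i).natAbs := by
        rw [hu_i, hv_i]
        omega
      refine hℓD.trans ?_
      exact_mod_cast Nat.cast_le.2 hDle
    rw [hset, prob_compl_eq_one_sub ((measurable_coordEvent _).inter (measurable_coordEvent _)),
      hpair]
  rw [Finset.prod_congr rfl hfac, Finset.prod_const, Finset.card_range]

end BadBound

section PerN
variable {d : ℕ}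

lemma main_bound (Q : Measure (Cfg d)) (hQ : Assumptions d Q) {ℓ : ℝ}
    (ha2 : ∀ A B : Set (Fin d → ℤ), (∀ x ∈ A, ∀ y ∈ B, ℓ ≤ nrm d (x - y)) →
      Indep (coordSigma d A) (coordSigma d B) Q)
    {D : ℕ} (hℓD : ℓ ≤ (D:ℝ)) (hD1 : 1 ≤ D) (i0 : Fin d) (n : ℕ) (hn : 2 * D + 2 ≤ n) :
    condP d Q (En d n)ᶜ ≤ (Q (Omega0 d))⁻¹ *
      ((((2*n+1)^d * d * 2 : ℕ) : ℝ≥0∞) * (1 - Q (Omega0 d) * Q (Omega0 d)) ^ (n / D + 1)) := by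
  haveI := hQ.prob
  set m : ℕ := n / D + 1 with hm
  set J : Finset ((Fin d → ℤ) × (Fin d) × ℤ) :=
    (Fintype.piFinset fun _ : Fin d => Finset.Icc (-(n:ℤ)) n) ×ˢ
      (((Finset.univ : Finset (Fin d)).erase i0) ×ˢ ({(D:ℤ), (D:ℤ)+1} : Finset ℤ)) with hJ
  set Bad : ((Fin d → ℤ) × (Fin d) × ℤ) → Set (Cfg d) := fun idx =>
    ⋂ j ∈ Finset.range m, {ω : Cfg d |
      ¬ (ω (Function.update idx.1 i0 (-(n:ℤ) + j * D)) = true ∧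
         ω (Function.update (Function.update idx.1 idx.2.1 (idx.1 idx.2.1 + idx.2.2)) i0
            (-(n:ℤ) + j * D)) = true)} with hBad
  -- inclusion
  have hincl : Omega0 d ∩ (En d n)ᶜ ⊆ ⋃ idx ∈ J, Bad idx := by
    intro ω hω
    by_contra hout
    refine hω.2 ?_
    refine good_implies_En hD1 hn i0 ω hω.1 ?_
    intro b hb0 hbox i hi s hs hbis
    have hidx : (b, i, s) ∈ J := by
      rw [hJ]
      refine Finset.mem_product.mpr ⟨?_, Finset.mem_product.mpr ⟨?_, ?_⟩⟩
      · refine Fintype.mem_piFinset.mpr (fun j => ?_)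
        have := hbox j
        rw [Finset.mem_Icc]
        show -(n:ℤ) ≤ b j ∧ b j ≤ (n:ℤ)
        omega
      · exact Finset.mem_erase.mpr ⟨hi, Finset.mem_univ i⟩
      · rcases hs with h | h <;> simp [h]
    have hnot : ω ∉ Bad (b, i, s) := fun hmem => hout (Set.mem_biUnion hidx hmem)
    rw [hBad] at hnot
    simp only [Set.mem_iInter, Set.mem_setOf_eq, not_forall, not_not] at hnot
    obtain ⟨j, hj, hocc1, hocc2⟩ := hnot
    rw [Finset.mem_range] at hj
    refine ⟨-(n:ℤ) + j * D, ?_, hocc1, hocc2⟩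
    have hjD : j * D ≤ n := by
      calc j * D ≤ (n / D) * D := Nat.mul_le_mul_right D (by omega)
        _ ≤ n := Nat.div_mul_le_self n D
    have hjD' : (j:ℤ) * (D:ℤ) ≤ (n:ℤ) := by exact_mod_cast hjD
    omega
  -- probability bound
  have hsum : Q (⋃ idx ∈ J, Bad idx) ≤
      (((2*n+1)^d * d * 2 : ℕ) : ℝ≥0∞) * (1 - Q (Omega0 d) * Q (Omega0 d)) ^ m := by
    refine (measure_biUnion_finset_le J Bad).trans ?_
    have heach : ∀ idx ∈ J, Q (Bad idx) = (1 - Q (Omega0 d) * Q (Omega0 d)) ^ m := by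
      intro idx hidx
      rw [hJ] at hidx
      obtain ⟨h1, h23⟩ := Finset.mem_product.mp hidx
      obtain ⟨h2, h3⟩ := Finset.mem_product.mp h23
      have hi : idx.2.1 ≠ i0 := (Finset.mem_erase.mp h2).1
      have hsD : (D:ℤ) ≤ idx.2.2 := by
        rcases Finset.mem_insert.mp h3 with h | h
        · rw [h]
        · rw [Finset.mem_singleton] at h; rw [h]; omega
      rw [hBad]
      exact bad_bound Q hQ ha2 hℓD hD1 i0 idx.2.1 hi idx.1 idx.2.2 hsD m n
    rw [Finset.sum_congr rfl heach, Finset.sum_const, nsmul_eq_mul]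
    refine mul_le_mul_left ?_ _
    have hcard : J.card ≤ (2*n+1)^d * d * 2 := by
      rw [hJ, Finset.card_product, Finset.card_product, Fintype.card_piFinset]
      have hIcc : (Finset.Icc (-(n:ℤ)) n).card = 2*n+1 := by
        rw [Int.card_Icc]
        omega
      simp only [hIcc, Finset.prod_const, Finset.card_univ, Fintype.card_fin]
      have h2 : ({(D:ℤ), (D:ℤ)+1} : Finset ℤ).card ≤ 2 := Finset.card_insert_le _ _
      have he : ((Finset.univ : Finset (Fin d)).erase i0).card ≤ d := by
        refine (Finset.card_erase_le).trans ?_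
        simp
      calc (2*n+1)^d * (((Finset.univ : Finset (Fin d)).erase i0).card *
            ({(D:ℤ), (D:ℤ)+1} : Finset ℤ).card)
          ≤ (2*n+1)^d * (d * 2) := by
            exact Nat.mul_le_mul_left _ (Nat.mul_le_mul he h2)
        _ = (2*n+1)^d * d * 2 := by ring
    exact_mod_cast Nat.cast_le.2 hcard
  -- conditional probability
  rw [condP, cond_apply measurable_Omega0]
  refine mul_le_mul_right ?_ _
  exact (measure_mono hincl).trans hsum

end PerN

set_option maxHeartbeats 1600000 in
/-- **condition (C) holds.** There are `C₁, C₂ > 0` such that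
`P(E_n^c) ≤ C₁ ρ^{C₂ n}` for all large `n`, where `ρ = 1 - Q(Ω₀)`; in particular
`(P(E_n^c))_n` is summable. -/
theorem conditionC_holds (d : ℕ) (hd : 2 ≤ d)
    (Q : Measure (Cfg d)) (hQ : Assumptions d Q) :
    (∃ C₁ C₂ : ℝ, 0 < C₁ ∧ 0 < C₂ ∧ ∃ n₀ : ℕ, ∀ n : ℕ, n₀ ≤ n →
      condP d Q (En d n)ᶜ
        ≤ ENNReal.ofReal (C₁ * (1 - (Q (Omega0 d)).toReal) ^ (C₂ * n))) ∧
    ∑' n : ℕ, condP d Q (En d n)ᶜ ≠ ⊤ := by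
  haveI := hQ.prob
  obtain ⟨ℓ, hℓpos, ha2⟩ := hQ.a2
  set D : ℕ := max ⌈ℓ⌉₊ 1 with hD
  have hD1 : 1 ≤ D := le_max_right _ _
  have hℓD : ℓ ≤ (D:ℝ) := (Nat.le_ceil ℓ).trans (Nat.cast_le.2 (le_max_left _ _))
  have hd1 : 0 < d := by omega
  set i0 : Fin d := ⟨0, hd1⟩ with hi0
  set q : ℝ := (Q (Omega0 d)).toReal with hq
  have hQtop : Q (Omega0 d) ≠ ⊤ := measure_ne_top Q _
  have hq0 : 0 < q := ENNReal.toReal_pos hQ.a1_pos.ne' hQtop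
  have hq1 : q < 1 := by
    have h := (ENNReal.toReal_lt_toReal hQtop ENNReal.one_ne_top).2 hQ.a1_lt
    rwa [ENNReal.toReal_one] at h
  set β : ℝ := 1 - q * q with hβ
  have hβ0 : 0 < β := by nlinarith
  have hβ1 : β < 1 := by nlinarith
  set ρ : ℝ := 1 - q with hρ
  have hρ0 : 0 < ρ := by nlinarith
  have hρ1 : ρ < 1 := by nlinarith
  -- per-n bound in ofReal form
  have hconv : ∀ n : ℕ, 2 * D + 2 ≤ n → condP d Q (En d n)ᶜ ≤
      ENNReal.ofReal (q⁻¹ * ((((2*n+1)^d * d * 2 : ℕ) : ℝ) * β ^ (n / D + 1))) := by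
    intro n hn
    refine (main_bound Q hQ ha2 hℓD hD1 i0 n hn).trans_eq ?_
    have e1 : Q (Omega0 d) = ENNReal.ofReal q := (ENNReal.ofReal_toReal hQtop).symm
    rw [e1, ← ENNReal.ofReal_mul hq0.le, ← ENNReal.ofReal_one,
      ← ENNReal.ofReal_sub 1 (by positivity : (0:ℝ) ≤ q * q), ← hβ,
      ← ENNReal.ofReal_pow hβ0.le, ← ENNReal.ofReal_natCast ((2*n+1)^d * d * 2),
      ← ENNReal.ofReal_mul (Nat.cast_nonneg _), ← ENNReal.ofReal_inv_of_pos hq0,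
      ← ENNReal.ofReal_mul (by positivity)]
  -- constants
  have hlogβ : Real.log β < 0 := Real.log_neg hβ0 hβ1
  have hlogρ : Real.log ρ < 0 := Real.log_neg hρ0 hρ1
  set C₂ : ℝ := Real.log β / Real.log ρ / (2 * D) with hC₂
  have hC₂0 : 0 < C₂ := by
    apply div_pos
    · exact div_pos_iff.mpr (Or.inr ⟨hlogβ, hlogρ⟩)
    · positivity
  have hDne : (D:ℝ) ≠ 0 := by positivity
  have hlρne : Real.log ρ ≠ 0 := ne_of_lt hlogρ
  have hkey : ∀ n : ℕ, ρ ^ (C₂ * (n:ℝ)) = β ^ ((n:ℝ) / (2*(D:ℝ))) := by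
    intro n
    rw [Real.rpow_def_of_pos hρ0, Real.rpow_def_of_pos hβ0]
    congr 1
    rw [hC₂]
    field_simp
  set r : ℝ := β ^ ((2*(D:ℝ))⁻¹) with hr
  have hr0 : 0 < r := Real.rpow_pos_of_pos hβ0 _
  have hr1 : r < 1 := Real.rpow_lt_one hβ0.le hβ1 (by positivity)
  have hrn : ∀ n : ℕ, r ^ n = β ^ ((n:ℝ) / (2*(D:ℝ))) := by
    intro n
    have harg : (2*(D:ℝ))⁻¹ * (n:ℝ) = (n:ℝ) / (2*(D:ℝ)) := by
      rw [inv_mul_eq_div]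
    rw [hr, ← Real.rpow_natCast (β ^ ((2*(D:ℝ))⁻¹)) n, ← Real.rpow_mul hβ0.le, harg]
  have hsplit : ∀ n : ℕ, β ^ ((n:ℝ) / (D:ℝ)) = r ^ n * ρ ^ (C₂ * (n:ℝ)) := by
    intro n
    rw [hrn n, hkey n, ← Real.rpow_add hβ0]
    congr 1
    field_simp
    ring
  -- eventual smallness
  have hsumm : Summable (fun n : ℕ => (n:ℝ)^d * r^n) := by
    refine summable_pow_mul_geometric_of_norm_lt_one d ?_
    rw [Real.norm_eq_abs, abs_of_pos hr0]
    exact hr1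
  have htend : Filter.Tendsto
      (fun n : ℕ => (q⁻¹ * (3:ℝ)^d * ((d:ℝ)*2)) * ((n:ℝ)^d * r^n)) atTop (𝓝 0) := by
    simpa using (hsumm.tendsto_atTop_zero).const_mul (q⁻¹ * (3:ℝ)^d * ((d:ℝ)*2))
  have hev : ∀ᶠ n : ℕ in atTop,
      (q⁻¹ * (3:ℝ)^d * ((d:ℝ)*2)) * ((n:ℝ)^d * r^n) < 1 :=
    htend.eventually_lt_const one_pos
  obtain ⟨n₀, hn₀⟩ := Filter.eventually_atTop.mp (hev.and (Filter.eventually_ge_atTop (2*D+3)))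
  -- main estimate
  have hmain : ∀ n : ℕ, n₀ ≤ n → condP d Q (En d n)ᶜ ≤
      ENNReal.ofReal (1 * ρ ^ (C₂ * (n:ℝ))) := by
    intro n hn
    obtain ⟨hsmall, hbig⟩ := hn₀ n hn
    have h2D : 2 * D + 2 ≤ n := by omega
    refine (hconv n h2D).trans (ENNReal.ofReal_le_ofReal ?_)
    set N : ℝ := (((2*n+1)^d * d * 2 : ℕ) : ℝ) with hN
    have hNnn : 0 ≤ N := Nat.cast_nonneg _
    set m : ℕ := n / D + 1 with hm
    -- β^m ≤ r^n * ρ^(C₂ n)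
    have hmge : ((n:ℝ) / (D:ℝ)) ≤ ((m:ℕ):ℝ) := by
      have hlt : n < m * D := by
        rw [hm]
        exact (Nat.div_lt_iff_lt_mul (by omega)).1 (Nat.lt_succ_self _)
      have hlt' : (n:ℝ) < (m:ℝ) * (D:ℝ) := by exact_mod_cast hlt
      rw [div_le_iff₀ (by positivity)]
      linarith
    have hβm : β ^ m ≤ r ^ n * ρ ^ (C₂ * (n:ℝ)) := by
      rw [← hsplit n]
      calc β ^ m = β ^ ((m:ℝ)) := (Real.rpow_natCast β m).symm
        _ ≤ β ^ ((n:ℝ) / (D:ℝ)) := Real.rpow_le_rpow_of_exponent_ge hβ0 hβ1.le hmge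
    -- N ≤ 3^d n^d (d*2)
    have hNle : N ≤ (3:ℝ)^d * (n:ℝ)^d * ((d:ℝ)*2) := by
      have h1 : (2*(n:ℝ)+1) ≤ 3 * (n:ℝ) := by
        have : (1:ℝ) ≤ (n:ℝ) := by exact_mod_cast (show (1:ℕ) ≤ n by omega)
        linarith
      have h2 : (2*(n:ℝ)+1)^d ≤ (3*(n:ℝ))^d := pow_le_pow_left₀ (by positivity) h1 d
      have h3 : (3*(n:ℝ))^d = (3:ℝ)^d * (n:ℝ)^d := mul_pow 3 (n:ℝ) d
      rw [hN]
      push_cast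
      calc (2*(n:ℝ)+1)^d * (d:ℝ) * 2 = (2*(n:ℝ)+1)^d * ((d:ℝ)*2) := by ring
        _ ≤ (3*(n:ℝ))^d * ((d:ℝ)*2) := by
            refine mul_le_mul_of_nonneg_right h2 (by positivity)
        _ = (3:ℝ)^d * (n:ℝ)^d * ((d:ℝ)*2) := by rw [h3]
    have hρn : (0:ℝ) ≤ ρ ^ (C₂ * (n:ℝ)) := Real.rpow_nonneg hρ0.le _
    have hrnn : (0:ℝ) ≤ r ^ n := by positivity
    calc q⁻¹ * (N * β ^ m) ≤ q⁻¹ * (N * (r ^ n * ρ ^ (C₂ * (n:ℝ)))) := by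
          refine mul_le_mul_of_nonneg_left (mul_le_mul_of_nonneg_left hβm hNnn) (by positivity)
      _ = (q⁻¹ * N * r ^ n) * ρ ^ (C₂ * (n:ℝ)) := by ring
      _ ≤ ((q⁻¹ * (3:ℝ)^d * ((d:ℝ)*2)) * ((n:ℝ)^d * r^n)) * ρ ^ (C₂ * (n:ℝ)) := by
          refine mul_le_mul_of_nonneg_right ?_ hρn
          calc q⁻¹ * N * r ^ n ≤ q⁻¹ * ((3:ℝ)^d * (n:ℝ)^d * ((d:ℝ)*2)) * r ^ n := by
                refine mul_le_mul_of_nonneg_right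
                  (mul_le_mul_of_nonneg_left hNle (by positivity)) hrnn
            _ = (q⁻¹ * (3:ℝ)^d * ((d:ℝ)*2)) * ((n:ℝ)^d * r^n) := by ring
      _ ≤ 1 * ρ ^ (C₂ * (n:ℝ)) := mul_le_mul_of_nonneg_right hsmall.le hρn
  refine ⟨⟨1, C₂, one_pos, hC₂0, n₀, hmain⟩, ?_⟩
  -- summability
  haveI hP : IsProbabilityMeasure (condP d Q) := by
    rw [condP]
    exact cond_isProbabilityMeasure hQ.a1_pos.ne'
  set r' : ℝ≥0∞ := ENNReal.ofReal (ρ ^ C₂) with hr'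
  have hr'1 : r' < 1 := by
    rw [hr']
    exact ENNReal.ofReal_lt_one.2 (Real.rpow_lt_one hρ0.le hρ1 hC₂0)
  have hcmp : ∀ n : ℕ, condP d Q (En d n)ᶜ ≤ (if n < n₀ then 1 else 0) + r' ^ n := by
    intro n
    by_cases h : n < n₀
    · rw [if_pos h]
      exact le_add_right prob_le_one
    · rw [if_neg h, zero_add]
      refine (hmain n (by omega)).trans ?_
      rw [one_mul]
      have he : ρ ^ (C₂ * (n:ℝ)) = (ρ ^ C₂) ^ n := by
        rw [Real.rpow_mul hρ0.le, Real.rpow_natCast]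
      rw [he, ENNReal.ofReal_pow (Real.rpow_nonneg hρ0.le _)]
  refine ne_top_of_le_ne_top ?_ (ENNReal.tsum_le_tsum hcmp)
  rw [ENNReal.tsum_add]
  refine ENNReal.add_ne_top.2 ⟨?_, ?_⟩
  · have hsupp : ∑' n : ℕ, (if n < n₀ then (1:ℝ≥0∞) else 0) =
        ∑ n ∈ Finset.range n₀, (if n < n₀ then (1:ℝ≥0∞) else 0) :=
      tsum_eq_sum (fun b hb => if_neg (by simpa using hb))
    rw [hsupp]
    have hval : ∑ n ∈ Finset.range n₀, (if n < n₀ then (1:ℝ≥0∞) else 0) = n₀ := by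
      rw [Finset.sum_congr rfl (fun i hi => if_pos (Finset.mem_range.1 hi))]
      simp
    rw [hval]
    exact (ENNReal.natCast_lt_top n₀).ne
  · rw [ENNReal.tsum_geometric]
    exact ENNReal.inv_ne_top.2 (fun h => (tsub_eq_zero_iff_le.1 h).not_gt hr'1)

end RWDPP
end
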